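/- Suppose the sequence of tuning parameters satisfies η_n → 0. For every sequence a_n of nonnegative real numbers, with E_{A,n} = [θ̃_A − σ̂ a_n, θ̃_A + σ̂ a_n] and C_{A,n} = [θ̂_A − a_n, θ̂_A + a_n], one has inf_{θ∈ℝ} P_{n,θ}(θ ∈ E_{A,n}) − inf_{θ∈ℝ} P_{n,θ}(θ ∈ C_{A,n}) → 0 as n → ∞. -/

import Mathlib

open MeasureTheory ProbabilityTheory Filter
open scoped NNReal

/-- Standard normal cumulative distribution function Φ. -/
noncomputable def stdNormCDF (x : ℝ) : ℝ :=
  ((gaussianReal 0 1) (Set.Iic x)).toReal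

/-- Soft-thresholding (LASSO) estimator with threshold η, as a function of ȳ. -/
noncomputable def softThresh (η y : ℝ) : ℝ := Real.sign y * max (|y| - η) 0

/-- Hard-thresholding estimator with threshold η, as a function of ȳ. -/
noncomputable def hardThresh (η y : ℝ) : ℝ := if η < |y| then y else 0

/-- Adaptive LASSO estimator with tuning parameter η, as a function of ȳ. -/
noncomputable def adaLasso (η y : ℝ) : ℝ := if |y| ≤ η then 0 else y - η ^ 2 / y

/-- Coverage probability `P_{n,θ}(θ ∈ [est(ȳ) - a, est(ȳ) + b])` in the
known-variance case (σ = 1), where ȳ ~ N(θ, 1/n). -/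
noncomputable def cover (n : ℕ) (est : ℝ → ℝ) (a b θ : ℝ) : ℝ :=
  ((gaussianReal θ ((n : ℝ≥0))⁻¹)
    {y : ℝ | est y - a ≤ θ ∧ θ ≤ est y + b}).toReal

/-- The distribution of `σ̂ = sqrt(Q/(n-1))` where `Q ~ χ²_{n-1}`; i.e. the law of the
square root of a chi-square random variable with `n-1` degrees of freedom divided by
`n - 1` (whose density is `h_n`). The chi-square distribution with `k` degrees of
freedom is the Gamma distribution with shape `k/2` and rate `1/2`. -/
noncomputable def sigmaHatLaw (n : ℕ) : Measure ℝ :=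
  (gammaMeasure (((n : ℝ) - 1) / 2) (1 / 2)).map
    (fun q => Real.sqrt (q / ((n : ℝ) - 1)))

/-- The cumulative distribution function `T_{n-1}` of the Student t-distribution with
`n-1` degrees of freedom, via `T_{n-1}(x) = ∫₀^∞ Φ(s x) h_n(s) ds`. -/
noncomputable def studentCDF (n : ℕ) (x : ℝ) : ℝ :=
  ∫ s, stdNormCDF (s * x) ∂(sigmaHatLaw n)

/-- Coverage probability `P_{n,θ}(θ ∈ [est(σ̂, ȳ) - σ̂ a, est(σ̂, ȳ) + σ̂ a])` in the
unknown-variance case (true σ = 1): `ȳ ~ N(θ, 1/n)` and `σ̂` (independent of `ȳ`) has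
law `sigmaHatLaw n`; here `est s y` is the feasible estimator computed from `ȳ = y` and
`σ̂ = s`. -/
noncomputable def coverUV (n : ℕ) (est : ℝ → ℝ → ℝ) (a θ : ℝ) : ℝ :=
  (((gaussianReal θ ((n : ℝ≥0))⁻¹).prod (sigmaHatLaw n))
    {p : ℝ × ℝ | est p.2 p.1 - p.2 * a ≤ θ ∧ θ ≤ est p.2 p.1 + p.2 * a}).toReal
section Toolkit

open MeasureTheory ProbabilityTheory Set
open scoped ENNReal

lemma psi_mono : Monotone stdNormCDF := by
  intro b c hbc
  unfold stdNormCDF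
  exact ENNReal.toReal_mono (measure_ne_top _ _) (measure_mono (Set.Iic_subset_Iic.2 hbc))

lemma psi_nonneg (x : ℝ) : 0 ≤ stdNormCDF x := ENNReal.toReal_nonneg

lemma psi_le_one (x : ℝ) : stdNormCDF x ≤ 1 := by
  unfold stdNormCDF
  rw [show (1:ℝ) = ((1 : ℝ≥0∞)).toReal by simp]
  exact ENNReal.toReal_mono (by simp) (prob_le_one)

lemma gauss01_Ioc {b c : ℝ} (h : c ≤ b) :
    stdNormCDF b - stdNormCDF c = ((gaussianReal 0 1) (Ioc c b)).toReal := by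
  have hu : Iic c ∪ Ioc c b = Iic b := Set.Iic_union_Ioc_eq_Iic h
  have hd : Disjoint (Iic c) (Ioc c b) := Iic_disjoint_Ioc le_rfl
  have hadd := measure_union (μ := gaussianReal 0 1) hd measurableSet_Ioc
  rw [hu] at hadd
  unfold stdNormCDF
  rw [hadd, ENNReal.toReal_add (measure_ne_top _ _) (measure_ne_top _ _)]
  ring

lemma gaussPDFReal_le_half (x : ℝ) : gaussianPDFReal 0 1 x ≤ 1/2 := by
  unfold gaussianPDFReal
  have h1 : Real.exp (- (x - 0)^2 / (2 * (1:ℝ≥0))) ≤ 1 := by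
    rw [Real.exp_le_one_iff]
    have : (0:ℝ) ≤ (x - 0)^2 := sq_nonneg _
    have h2 : (0:ℝ) < 2 * (1:ℝ≥0) := by norm_num
    apply div_nonpos_of_nonpos_of_nonneg
    · nlinarith
    · positivity
  have h2 : (2:ℝ) ≤ Real.sqrt (2 * Real.pi * (1:ℝ≥0)) := by
    rw [show ((1:ℝ≥0):ℝ) = 1 by simp, mul_one]
    have : (4:ℝ) ≤ 2 * Real.pi := by nlinarith [Real.pi_gt_three]
    calc (2:ℝ) = Real.sqrt 4 := by rw [show (4:ℝ) = 2^2 by norm_num, Real.sqrt_sq (by norm_num)]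
    _ ≤ _ := Real.sqrt_le_sqrt this
  have h3 : (Real.sqrt (2 * Real.pi * (1:ℝ≥0)))⁻¹ ≤ 1/2 := by
    rw [inv_le_comm₀ (by linarith) (by norm_num)]
    simpa using h2
  calc (Real.sqrt (2 * Real.pi * (1:ℝ≥0)))⁻¹ * Real.exp (- (x - 0)^2 / (2 * (1:ℝ≥0)))
      ≤ (Real.sqrt (2 * Real.pi * (1:ℝ≥0)))⁻¹ * 1 := by
        apply mul_le_mul_of_nonneg_left h1
        positivity
    _ ≤ 1/2 := by rwa [mul_one]

lemma psi_lipschitz_le {b c : ℝ} (h : c ≤ b) :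
    stdNormCDF b - stdNormCDF c ≤ (b - c)/2 := by
  rw [gauss01_Ioc h]
  have h1 : (gaussianReal 0 1) (Ioc c b) ≤ ENNReal.ofReal ((b-c)/2) := by
    rw [gaussianReal_apply _ (one_ne_zero) _]
    calc ∫⁻ x in Ioc c b, gaussianPDF 0 1 x
        ≤ ∫⁻ _ in Ioc c b, ENNReal.ofReal (1/2) := by
          apply lintegral_mono
          intro x
          exact ENNReal.ofReal_le_ofReal (gaussPDFReal_le_half x)
      _ = ENNReal.ofReal (1/2) * volume (Ioc c b) := by rw [setLIntegral_const]
      _ = ENNReal.ofReal (1/2) * ENNReal.ofReal (b - c) := by rw [Real.volume_Ioc]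
      _ = ENNReal.ofReal ((b-c)/2) := by
          rw [← ENNReal.ofReal_mul (by norm_num)]
          ring_nf
  calc ((gaussianReal 0 1) (Ioc c b)).toReal ≤ (ENNReal.ofReal ((b-c)/2)).toReal :=
        ENNReal.toReal_mono (by simp) h1
    _ = (b-c)/2 := ENNReal.toReal_ofReal (by linarith)

lemma psi_lipschitz (b c : ℝ) : |stdNormCDF b - stdNormCDF c| ≤ |b - c|/2 := by
  rcases le_total c b with h | h
  · rw [abs_of_nonneg (by linarith [psi_mono h] : (0:ℝ) ≤ stdNormCDF b - stdNormCDF c),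
      abs_of_nonneg (by linarith : (0:ℝ) ≤ b - c)]
    exact psi_lipschitz_le h
  · rw [abs_sub_comm, abs_sub_comm b c]
    rw [abs_of_nonneg (by linarith [psi_mono h] : (0:ℝ) ≤ stdNormCDF c - stdNormCDF b),
      abs_of_nonneg (by linarith : (0:ℝ) ≤ c - b)]
    exact psi_lipschitz_le h

lemma gauss01_singleton (x : ℝ) : (gaussianReal 0 1) {x} = 0 :=
  gaussianReal_absolutelyContinuous 0 one_ne_zero (Real.volume_singleton)

lemma psi_neg (x : ℝ) : stdNormCDF (-x) = 1 - stdNormCDF x := by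
  have hmap := gaussianReal_map_const_mul (μ := 0) (v := 1) (-1)
  have hv : (NNReal.mk ((-1:ℝ)^2) (sq_nonneg _) * 1 : ℝ≥0) = 1 := by
    apply NNReal.coe_injective; simp
  rw [show ((-1:ℝ))*0 = 0 by ring, hv] at hmap
  have hpre : (fun y : ℝ => (-1) * y) ⁻¹' (Iic (-x)) = Ici x := by
    ext y; simp only [Set.mem_preimage, Set.mem_Iic, Set.mem_Ici]; constructor <;> intro <;> linarith
  have h1 : (gaussianReal 0 1) (Iic (-x)) = (gaussianReal 0 1) (Ici x) := by
    conv_lhs => rw [← hmap]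
    rw [Measure.map_apply (by fun_prop) measurableSet_Iic, hpre]
  have h2 : (gaussianReal 0 1) (Ici x) = 1 - (gaussianReal 0 1) (Iio x) := by
    rw [← Set.compl_Iio, prob_compl_eq_one_sub measurableSet_Iio]
  have h3 : (gaussianReal 0 1) (Iio x) = (gaussianReal 0 1) (Iic x) := by
    rw [(Set.Iio_union_right (a := x)).symm,
      measure_union (by simp) (measurableSet_singleton x), gauss01_singleton, add_zero]
  unfold stdNormCDF
  rw [h1, h2, h3, ENNReal.toReal_sub_of_le (prob_le_one) (by simp)]
  simp

lemma psi_tendsto_one : Filter.Tendsto stdNormCDF Filter.atTop (nhds 1) := by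
  have h := tendsto_measure_Iic_atTop (μ := gaussianReal 0 1)
  rw [show (gaussianReal 0 1) Set.univ = 1 from measure_univ] at h
  have h2 := (ENNReal.tendsto_toReal (by norm_num : (1:ℝ≥0∞) ≠ ⊤)).comp h
  exact (by simpa [stdNormCDF, Function.comp_def, ENNReal.toReal_one] using h2 :
    Tendsto (fun x => ((gaussianReal 0 1) (Iic x)).toReal) atTop (nhds 1))

end Toolkit
section Endpoints

open Set

/-- Upper endpoint of the preimage of `(-∞, t]` under the adaptive-LASSO map. -/
noncomputable def UU (h t : ℝ) : ℝ :=
  if 0 ≤ t then (t + Real.sqrt (t^2 + 4*h^2))/2 else (t - Real.sqrt (t^2 + 4*h^2))/2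

/-- Lower endpoint of the preimage of `[t, ∞)` under the adaptive-LASSO map. -/
noncomputable def LL (h t : ℝ) : ℝ := -(UU h (-t))

lemma sqq_nonneg (h t : ℝ) : 0 ≤ Real.sqrt (t^2 + 4*h^2) := Real.sqrt_nonneg _

lemma sqq_sq (h t : ℝ) : (Real.sqrt (t^2 + 4*h^2))^2 = t^2 + 4*h^2 :=
  Real.sq_sqrt (by positivity)

lemma sqq_ge_abs (h t : ℝ) : |t| ≤ Real.sqrt (t^2 + 4*h^2) := by
  rw [← Real.sqrt_sq_eq_abs]
  exact Real.sqrt_le_sqrt (by nlinarith [sq_nonneg h])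

lemma sqq_ge_2h {h : ℝ} (hh : 0 ≤ h) (t : ℝ) : 2*h ≤ Real.sqrt (t^2 + 4*h^2) := by
  rw [show (2:ℝ)*h = Real.sqrt ((2*h)^2) by rw [Real.sqrt_sq (by linarith)]]
  exact Real.sqrt_le_sqrt (by nlinarith [sq_nonneg t])

/-- combined Lipschitz property of the square-root expression -/
lemma sqq_lip {h h' t t' : ℝ} (hh : 0 ≤ h) (hh' : 0 ≤ h') :
    |Real.sqrt (t^2 + 4*h^2) - Real.sqrt (t'^2 + 4*h'^2)| ≤ |t - t'| + 2*|h - h'| := by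
  set s := Real.sqrt (t^2 + 4*h^2) with hs
  set s' := Real.sqrt (t'^2 + 4*h'^2) with hs'
  have h1 : s^2 = t^2 + 4*h^2 := sqq_sq h t
  have h2 : s'^2 = t'^2 + 4*h'^2 := sqq_sq h' t'
  have h3 : 0 ≤ s := sqq_nonneg h t
  have h4 : 0 ≤ s' := sqq_nonneg h' t'
  have h5 : |t| ≤ s := sqq_ge_abs h t
  have h6 : |t'| ≤ s' := sqq_ge_abs h' t'
  have h7 : 2*h ≤ s := sqq_ge_2h hh t
  have h8 : 2*h' ≤ s' := sqq_ge_2h hh' t'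
  rcases eq_or_lt_of_le (by linarith : (0:ℝ) ≤ s + s') with heq | hpos
  · have hz1 : s = 0 := by linarith
    have hz2 : s' = 0 := by linarith
    rw [hz1, hz2]
    simp only [sub_zero, sub_self, abs_zero]
    positivity
  have key : |s^2 - s'^2| ≤ (|t - t'| + 2*|h - h'|) * (s + s') := by
    have e : s^2 - s'^2 = (t - t')*(t + t') + (h - h')*(4*(h + h')) := by
      rw [h1, h2]; ring
    calc |s^2 - s'^2| ≤ |(t - t') * (t + t')| + |(h - h') * (4*(h + h'))| := by
          rw [e]; exact abs_add_le _ _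
      _ = |t - t'| * |t + t'| + |h - h'| * (4*(h + h')) := by
          rw [abs_mul, abs_mul, abs_of_nonneg (by linarith : (0:ℝ) ≤ 4*(h+h'))]
      _ ≤ |t - t'| * (s + s') + |h - h'| * (2*(s + s')) := by
          apply add_le_add
          · apply mul_le_mul_of_nonneg_left _ (abs_nonneg _)
            calc |t + t'| ≤ |t| + |t'| := abs_add_le _ _
              _ ≤ s + s' := by linarith
          · apply mul_le_mul_of_nonneg_left _ (abs_nonneg _)
            linarith
      _ = (|t - t'| + 2*|h - h'|) * (s + s') := by ring
  have e2 : |s - s'| * (s + s') = |s^2 - s'^2| := by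
    rw [show s^2 - s'^2 = (s - s')*(s + s') by ring, abs_mul,
      abs_of_nonneg (by linarith : (0:ℝ) ≤ s + s')]
  rw [← e2] at key
  exact le_of_mul_le_mul_right key hpos

lemma uu_lip {h h' t t' : ℝ} (hh : 0 ≤ h) (hh' : 0 ≤ h') (ht : 0 ≤ t) (ht' : 0 ≤ t') :
    |UU h t - UU h' t'| ≤ |t - t'| + |h - h'| := by
  rw [UU, UU, if_pos ht, if_pos ht']
  have hl := sqq_lip (t := t) (t' := t') hh hh'
  have e : (t + Real.sqrt (t^2 + 4*h^2))/2 - (t' + Real.sqrt (t'^2 + 4*h'^2))/2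
      = ((t - t') + (Real.sqrt (t^2 + 4*h^2) - Real.sqrt (t'^2 + 4*h'^2)))/2 := by ring
  rw [e, abs_div, abs_two]
  calc |(t - t') + (Real.sqrt (t^2 + 4*h^2) - Real.sqrt (t'^2 + 4*h'^2))|/2
      ≤ (|t - t'| + |Real.sqrt (t^2 + 4*h^2) - Real.sqrt (t'^2 + 4*h'^2)|)/2 := by
        gcongr
        exact abs_add_le _ _
    _ ≤ |t - t'| + |h - h'| := by linarith [abs_nonneg (t - t')]

lemma ll_lip_h {h h' : ℝ} (t : ℝ) (hh : 0 ≤ h) (hh' : 0 ≤ h') :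
    |LL h t - LL h' t| ≤ |h - h'| := by
  rw [LL, LL, show -(UU h (-t)) - -(UU h' (-t)) = -(UU h (-t) - UU h' (-t)) by ring, abs_neg]
  by_cases ht : 0 ≤ -t
  · have := uu_lip (t := -t) (t' := -t) hh hh' ht ht
    simpa using this
  · push_neg at ht
    rw [UU, UU, if_neg (by linarith), if_neg (by linarith)]
    have hl := sqq_lip (t := -t) (t' := -t) hh hh'
    simp only [sub_self, abs_zero, zero_add] at hl
    have e : (-t - Real.sqrt ((-t)^2 + 4*h^2))/2 - (-t - Real.sqrt ((-t)^2 + 4*h'^2))/2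
        = -((Real.sqrt ((-t)^2 + 4*h^2) - Real.sqrt ((-t)^2 + 4*h'^2)))/2 := by ring
    rw [e, abs_div, abs_two, abs_neg]
    linarith [abs_nonneg (h - h')]

/-- the adaptive LASSO function is odd -/
lemma adaLasso_neg (h y : ℝ) : adaLasso h (-y) = -(adaLasso h y) := by
  unfold adaLasso
  rw [abs_neg]
  by_cases hy : |y| ≤ h
  · simp [hy]
  · rw [if_neg hy, if_neg hy, div_neg]
    ring

lemma adaLasso_le_iff {h : ℝ} (hh : 0 ≤ h) (t y : ℝ) :
    adaLasso h y ≤ t ↔ y ≤ UU h t := by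
  set s := Real.sqrt (t^2 + 4*h^2) with hsdef
  have h1 : s^2 = t^2 + 4*h^2 := sqq_sq h t
  have h3 : 0 ≤ s := sqq_nonneg h t
  have habs : -s ≤ t ∧ t ≤ s := abs_le.1 (sqq_ge_abs h t)
  have h7 : 2*h ≤ s := sqq_ge_2h hh t
  by_cases ht : 0 ≤ t
  · rw [UU, if_pos ht, ← hsdef]
    have hUh : h ≤ (t + s)/2 := by linarith
    by_cases hy : |y| ≤ h
    · have hy' : y ≤ h := le_trans (le_abs_self y) hy
      rw [adaLasso, if_pos hy]
      exact iff_of_true ht (by linarith)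
    · push_neg at hy
      rw [adaLasso, if_neg (not_le.2 hy)]
      have hval : y - h^2/y = (y^2 - h^2)/y := by
        have hy0 : y ≠ 0 := by
          intro h0; rw [h0, abs_zero] at hy; linarith
        field_simp
      rcases abs_cases y with ⟨hy1, _⟩ | ⟨hy1, _⟩
      · -- y = |y| > h ≥ 0
        have hy0 : (0:ℝ) < y := by linarith [hy1 ▸ hy]
        rw [hval, div_le_iff₀ hy0]
        constructor
        · intro hq
          by_contra hgt
          push_neg at hgt
          have hA : 0 < y - (t + s)/2 := by linarith
          have hB : 0 < y - (t - s)/2 := by linarith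
          nlinarith [mul_pos hA hB]
        · intro hle
          have hA : 0 ≤ (t + s)/2 - y := by linarith
          have hB : 0 ≤ y - (t - s)/2 := by linarith
          nlinarith [mul_nonneg hA hB]
      · -- y = -|y| < -h ≤ 0
        have hy0 : y < 0 := by linarith [hy1 ▸ hy]
        have hyh : y < -h := by linarith
        apply iff_of_true
        · rw [hval]
          apply le_trans _ ht
          apply div_nonpos_of_nonneg_of_nonpos _ (le_of_lt hy0)
          nlinarith
        · linarith
  · push_neg at ht
    rw [UU, if_neg (not_le.2 ht), ← hsdef]
    have hspos : 0 < s := by linarith [habs.1]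
    have hrU : (t - s)/2 < -h := by
      rcases lt_or_ge (t + 2*h) 0 with hc | hc
      · linarith
      · have hhpos : 0 < h := by linarith
        nlinarith
    by_cases hy : |y| ≤ h
    · apply iff_of_false
      · rw [adaLasso, if_pos hy]; linarith
      · push_neg
        calc (t - s)/2 < -h := hrU
          _ ≤ -|y| := by linarith
          _ ≤ y := neg_abs_le y
    · push_neg at hy
      rw [adaLasso, if_neg (not_le.2 hy)]
      have hy0' : y ≠ 0 := by intro h0; rw [h0, abs_zero] at hy; linarith
      have hval : y - h^2/y = (y^2 - h^2)/y := by field_simp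
      rcases abs_cases y with ⟨hy1, _⟩ | ⟨hy1, _⟩
      · -- y > h ≥ 0 : both sides false
        have hy0 : (0:ℝ) < y := by linarith [hy1 ▸ hy]
        apply iff_of_false
        · push_neg
          rw [hval]
          calc t < 0 := ht
            _ ≤ (y^2 - h^2)/y := div_nonneg (by nlinarith) (le_of_lt hy0)
        · push_neg
          calc (t - s)/2 < -h := hrU
            _ ≤ 0 := by linarith
            _ < y := hy0
      · -- y < -h
        have hy0 : y < 0 := by linarith [hy1 ▸ hy]
        have hyh : y < -h := by linarith
        rw [hval, div_le_iff_of_neg hy0]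
        have hyrp : y < (t + s)/2 := by linarith
        constructor
        · intro hq
          by_contra hgt
          push_neg at hgt
          have hA : 0 < (t + s)/2 - y := by linarith
          have hB : 0 < y - (t - s)/2 := by linarith
          nlinarith [mul_pos hA hB]
        · intro hle
          have hA : 0 ≤ (t + s)/2 - y := by linarith
          have hB : 0 ≤ (t - s)/2 - y := by linarith
          nlinarith [mul_nonneg hA hB]

lemma adaLasso_ge_iff {h : ℝ} (hh : 0 ≤ h) (t y : ℝ) :
    t ≤ adaLasso h y ↔ LL h t ≤ y := by
  have h1 := adaLasso_le_iff hh (-t) (-y)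
  rw [adaLasso_neg] at h1
  constructor
  · intro hle
    have : adaLasso h y * (-1) ≤ (-t) := by linarith
    have h2 : -adaLasso h y ≤ -t := by linarith
    have := h1.1 h2
    rw [LL]
    linarith
  · intro hle
    rw [LL] at hle
    have h2 : -y ≤ UU h (-t) := by linarith
    have := h1.2 h2
    linarith

lemma event_eq {h : ℝ} (hh : 0 ≤ h) (θ aa bb : ℝ) :
    {y : ℝ | adaLasso h y - aa ≤ θ ∧ θ ≤ adaLasso h y + bb}
      = Icc (LL h (θ - bb)) (UU h (θ + aa)) := by
  ext y
  simp only [Set.mem_setOf_eq, Set.mem_Icc]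
  constructor
  · rintro ⟨c1, c2⟩
    constructor
    · exact (adaLasso_ge_iff hh (θ - bb) y).1 (by linarith)
    · exact (adaLasso_le_iff hh (θ + aa) y).1 (by linarith)
  · rintro ⟨c1, c2⟩
    constructor
    · linarith [(adaLasso_le_iff hh (θ + aa) y).2 c2]
    · linarith [(adaLasso_ge_iff hh (θ - bb) y).2 c1]

lemma ll_mono {h : ℝ} (hh : 0 ≤ h) {t₁ t₂ : ℝ} (h12 : t₁ ≤ t₂) : LL h t₁ ≤ LL h t₂ := by
  have m2 : t₂ ≤ adaLasso h (LL h t₂) := (adaLasso_ge_iff hh t₂ (LL h t₂)).2 le_rfl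
  exact (adaLasso_ge_iff hh t₁ (LL h t₂)).1 (le_trans h12 m2)

lemma ll_le_uu {h : ℝ} (hh : 0 ≤ h) {t₁ t₂ : ℝ} (h12 : t₁ ≤ t₂) : LL h t₁ ≤ UU h t₂ := by
  by_cases h2 : 0 ≤ t₂
  · by_cases h1 : 0 < t₁
    · rw [LL, UU, UU, if_pos h2, if_neg (not_le.2 (by linarith : -t₁ < (0:ℝ))), neg_sq]
      have hmono : Real.sqrt (t₁^2 + 4*h^2) ≤ Real.sqrt (t₂^2 + 4*h^2) :=
        Real.sqrt_le_sqrt (by nlinarith)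
      ring_nf
      ring_nf at hmono ⊢
      linarith
    · push_neg at h1
      rw [LL, UU, UU, if_pos h2, if_pos (by linarith : (0:ℝ) ≤ -t₁), neg_sq]
      have e1 := sqq_ge_abs h t₁
      have e2 := sqq_ge_abs h t₂
      have e3 := abs_le.1 e1
      have e4 := abs_le.1 e2
      linarith
  · push_neg at h2
    have h1 : t₁ < 0 := by linarith
    rw [LL, UU, UU, if_neg (not_le.2 h2), if_pos (by linarith : (0:ℝ) ≤ -t₁), neg_sq]
    have hmono : Real.sqrt (t₂^2 + 4*h^2) ≤ Real.sqrt (t₁^2 + 4*h^2) :=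
      Real.sqrt_le_sqrt (by nlinarith)
    linarith

lemma uu_ge {h : ℝ} (hh : 0 ≤ h) (t : ℝ) : t - h ≤ UU h t := by
  set s := Real.sqrt (t^2 + 4*h^2) with hsdef
  have h1 : s^2 = t^2 + 4*h^2 := sqq_sq h t
  have h3 : 0 ≤ s := sqq_nonneg h t
  have habs : -s ≤ t ∧ t ≤ s := abs_le.1 (sqq_ge_abs h t)
  by_cases ht : 0 ≤ t
  · rw [UU, if_pos ht, ← hsdef]; linarith
  · push_neg at ht
    rw [UU, if_neg (not_le.2 ht), ← hsdef]
    have : s ≤ 2*h - t := by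
      rw [show (2:ℝ)*h - t = Real.sqrt ((2*h - t)^2) by rw [Real.sqrt_sq (by linarith)], hsdef]
      exact Real.sqrt_le_sqrt (by nlinarith)
    linarith

lemma ll_le {h : ℝ} (hh : 0 ≤ h) (t : ℝ) : LL h t ≤ t + h := by
  rw [LL]
  have := uu_ge hh (-t)
  linarith

lemma ll_ge_self {h t : ℝ} (ht : 0 < t) : t ≤ LL h t := by
  rw [LL, UU, if_neg (by push_neg; linarith)]
  have habs : |(-t)| ≤ Real.sqrt ((-t)^2 + 4*h^2) := sqq_ge_abs h (-t)
  rw [abs_of_neg (by linarith)] at habs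
  linarith

lemma uu_le_tail {h t : ℝ} (hh : 0 ≤ h) (ht : 0 < t) : UU h t ≤ t + h^2/t := by
  rw [UU, if_pos ht.le]
  set s := Real.sqrt (t^2 + 4*h^2) with hsdef
  have h1 : s^2 = t^2 + 4*h^2 := sqq_sq h t
  have habs : t ≤ s := le_trans (le_abs_self t) (sqq_ge_abs h t)
  have key : (t + s)/2 - t ≤ h^2/t := by
    rw [le_div_iff₀ ht]
    nlinarith [sq_nonneg (s - t)]
  linarith

lemma uu_scale {c : ℝ} (hc : 0 < c) (h t : ℝ) : UU (c*h) (c*t) = c * UU h t := by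
  have hsq : Real.sqrt ((c*t)^2 + 4*(c*h)^2) = c * Real.sqrt (t^2 + 4*h^2) := by
    rw [show (c*t)^2 + 4*(c*h)^2 = (c^2)*(t^2 + 4*h^2) by ring, Real.sqrt_mul (sq_nonneg c),
      Real.sqrt_sq hc.le]
  by_cases ht : 0 ≤ t
  · rw [UU, UU, if_pos ht, if_pos (by positivity), hsq]; ring
  · push_neg at ht
    rw [UU, UU, if_neg (not_le.2 ht), if_neg (not_le.2 (mul_neg_of_pos_of_neg hc ht)), hsq]
    ring

lemma ll_scale {c : ℝ} (hc : 0 < c) (h t : ℝ) : LL (c*h) (c*t) = c * LL h t := by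
  rw [LL, LL, show -(c*t) = c*(-t) by ring, uu_scale hc]
  ring

end Endpoints
section CoverageFunction

/-- Normalized coverage probability of the adaptive-LASSO interval:
threshold `h`, half-length `α`, true mean `x`, noise `N(0,1)`. -/
noncomputable def FF (h α x : ℝ) : ℝ :=
  stdNormCDF (UU h (x + α) - x) - stdNormCDF (LL h (x - α) - x)

lemma FF_le_one (h α x : ℝ) : FF h α x ≤ 1 := by
  unfold FF
  linarith [psi_le_one (UU h (x + α) - x), psi_nonneg (LL h (x - α) - x)]

lemma uu_neg_eq (h t : ℝ) : UU h (-t) = -(LL h t) := by rw [LL]; ring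

lemma FF_symm (h α x : ℝ) : FF h α (-x) = FF h α x := by
  unfold FF
  have e1 : UU h (-x + α) - (-x) = -(LL h (x - α) - x) := by
    rw [show -x + α = -(x - α) by ring, uu_neg_eq]; ring
  have e2 : LL h (-x - α) - (-x) = -(UU h (x + α) - x) := by
    rw [show -x - α = -(x + α) by ring, LL, neg_neg]; ring
  rw [e1, e2, psi_neg, psi_neg]
  ring

lemma FF_ge_easy {h α : ℝ} (hh : 0 ≤ h) (x : ℝ) :
    stdNormCDF (α - h) - stdNormCDF (-(α - h)) ≤ FF h α x := by
  unfold FF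
  have m1 := psi_mono (show α - h ≤ UU h (x + α) - x by linarith [uu_ge hh (x + α)])
  have m2 := psi_mono (show LL h (x - α) - x ≤ -(α - h) by linarith [ll_le hh (x - α)])
  linarith

lemma FF_fallback {h α x : ℝ} (hh : 0 ≤ h) (hα : 0 ≤ α) (hx : α < x) :
    FF h α x ≤ α + h^2/(2*(x + α)) := by
  unfold FF
  have hxα : (0:ℝ) < x + α := by linarith
  have m1 := psi_mono (show UU h (x + α) - x ≤ α + h^2/(x + α) by
    linarith [uu_le_tail hh hxα])
  have m2 := psi_mono (show -α ≤ LL h (x - α) - x by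
    linarith [ll_ge_self (h := h) (t := x - α) (by linarith)])
  have lip := psi_lipschitz (α + h^2/(x + α)) (-α)
  have h9 : 0 ≤ h^2/(x + α) := div_nonneg (sq_nonneg h) hxα.le
  have habs : |α + h^2/(x + α) - (-α)| = 2*α + h^2/(x + α) := by
    rw [abs_of_nonneg (by linarith)]
    ring
  rw [habs] at lip
  have lip2 : stdNormCDF (α + h^2/(x + α)) - stdNormCDF (-α) ≤ (2*α + h^2/(x + α))/2 :=
    le_trans (le_abs_self _) lip
  have efin : (2*α + h^2/(x + α))/2 = α + h^2/(2*(x + α)) := by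
    field_simp
  linarith

lemma FF_rightward {h α x₁ x₂ : ℝ} (hh : 0 ≤ h) (hα : 0 ≤ α) (hx1 : 0 ≤ x₁) (h12 : x₁ ≤ x₂) :
    FF h α x₂ ≤ FF h α x₁ + (3/2)*(x₂ - x₁) := by
  unfold FF
  -- upper endpoints
  have hU : |UU h (x₂ + α) - UU h (x₁ + α)| ≤ |x₂ + α - (x₁ + α)| + |h - h| :=
    uu_lip hh hh (by linarith) (by linarith)
  rw [sub_self, abs_zero, add_zero,
    show x₂ + α - (x₁ + α) = x₂ - x₁ by ring, abs_of_nonneg (by linarith : (0:ℝ) ≤ x₂ - x₁)] at hU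
  have hAA : |(UU h (x₂ + α) - x₂) - (UU h (x₁ + α) - x₁)| ≤ 2*(x₂ - x₁) := by
    have := abs_add_le (UU h (x₂ + α) - UU h (x₁ + α)) (-(x₂ - x₁))
    rw [abs_neg, abs_of_nonneg (by linarith : (0:ℝ) ≤ x₂ - x₁)] at this
    calc |(UU h (x₂ + α) - x₂) - (UU h (x₁ + α) - x₁)|
        = |(UU h (x₂ + α) - UU h (x₁ + α)) + -(x₂ - x₁)| := by ring_nf
      _ ≤ |UU h (x₂ + α) - UU h (x₁ + α)| + (x₂ - x₁) := this
      _ ≤ 2*(x₂ - x₁) := by linarith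
  have hAψ : stdNormCDF (UU h (x₂ + α) - x₂) - stdNormCDF (UU h (x₁ + α) - x₁) ≤ x₂ - x₁ := by
    have := psi_lipschitz (UU h (x₂ + α) - x₂) (UU h (x₁ + α) - x₁)
    have h2 := le_abs_self (stdNormCDF (UU h (x₂ + α) - x₂) - stdNormCDF (UU h (x₁ + α) - x₁))
    linarith
  -- lower endpoints
  have hL : LL h (x₁ - α) ≤ LL h (x₂ - α) := ll_mono hh (by linarith)
  have hBle : (LL h (x₁ - α) - x₁) - (LL h (x₂ - α) - x₂) ≤ x₂ - x₁ := by linarith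
  have hBψ : stdNormCDF (LL h (x₁ - α) - x₁) - stdNormCDF (LL h (x₂ - α) - x₂)
      ≤ (x₂ - x₁)/2 := by
    rcases le_total (LL h (x₁ - α) - x₁) (LL h (x₂ - α) - x₂) with hc | hc
    · have := psi_mono hc
      linarith
    · have hlip := psi_lipschitz (LL h (x₁ - α) - x₁) (LL h (x₂ - α) - x₂)
      rw [abs_of_nonneg (sub_nonneg.2 hc)] at hlip
      have h2 := le_abs_self (stdNormCDF (LL h (x₁ - α) - x₁) - stdNormCDF (LL h (x₂ - α) - x₂))
      linarith
  linarith

lemma FF_recenter {h h' α α' x : ℝ} (hh : 0 ≤ h) (hh' : 0 ≤ h') (hα : 0 ≤ α) (hα' : 0 ≤ α')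
    (hx : 0 ≤ x) (hd : |α - α'| ≤ α) :
    |FF h' α' x - FF h α (x + α - α')| ≤ 2*|α - α'| + |h - h'| := by
  have habsd := abs_le.1 hd
  set x' := x + α - α' with hx'def
  have ht' : (0:ℝ) ≤ x + α' := by linarith
  have ht : (0:ℝ) ≤ x' + α := by
    rw [hx'def]
    have : x + α - α' + α = x + α + (α - α') := by ring
    linarith [habsd.1]
  -- upper arguments
  have hU : |UU h' (x + α') - UU h (x' + α)| ≤ |x + α' - (x' + α)| + |h' - h| :=
    uu_lip hh' hh ht' ht
  have eA : |x + α' - (x' + α)| = 2*|α - α'| := by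
    rw [hx'def, show x + α' - (x + α - α' + α) = -(2*(α - α')) by ring, abs_neg, abs_mul]
    simp [abs_two]
  rw [eA] at hU
  have hAA : |(UU h' (x + α') - x) - (UU h (x' + α) - x')| ≤ 3*|α - α'| + |h - h'| := by
    have e : (UU h' (x + α') - x) - (UU h (x' + α) - x')
        = (UU h' (x + α') - UU h (x' + α)) + (x' - x) := by ring
    have e2 : |x' - x| = |α - α'| := by
      rw [hx'def, show x + α - α' - x = α - α' by ring]
    calc |(UU h' (x + α') - x) - (UU h (x' + α) - x')|
        ≤ |UU h' (x + α') - UU h (x' + α)| + |x' - x| := by rw [e]; exact abs_add_le _ _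
      _ ≤ (2*|α - α'| + |h' - h|) + |α - α'| := by rw [e2]; linarith
      _ = 3*|α - α'| + |h - h'| := by rw [abs_sub_comm h' h]; ring
  -- lower arguments
  have eT : x' - α = x - α' := by rw [hx'def]; ring
  have hBB : |(LL h' (x - α') - x) - (LL h (x' - α) - x')| ≤ |α - α'| + |h - h'| := by
    rw [eT]
    have hll := ll_lip_h (x - α') hh' hh
    have e : (LL h' (x - α') - x) - (LL h (x - α') - x')
        = (LL h' (x - α') - LL h (x - α')) + (x' - x) := by ring
    have e2 : |x' - x| = |α - α'| := by
      rw [hx'def, show x + α - α' - x = α - α' by ring]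
    calc |(LL h' (x - α') - x) - (LL h (x - α') - x')|
        ≤ |LL h' (x - α') - LL h (x - α')| + |x' - x| := by rw [e]; exact abs_add_le _ _
      _ ≤ |h' - h| + |α - α'| := by rw [e2]; linarith
      _ = |α - α'| + |h - h'| := by rw [abs_sub_comm h' h]; ring
  -- combine
  have l1 := psi_lipschitz (UU h' (x + α') - x) (UU h (x' + α) - x')
  have l2 := psi_lipschitz (LL h' (x - α') - x) (LL h (x' - α) - x')
  unfold FF
  have e : (stdNormCDF (UU h' (x + α') - x) - stdNormCDF (LL h' (x - α') - x))
      - (stdNormCDF (UU h (x' + α) - x') - stdNormCDF (LL h (x' - α) - x'))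
      = (stdNormCDF (UU h' (x + α') - x) - stdNormCDF (UU h (x' + α) - x'))
        - (stdNormCDF (LL h' (x - α') - x) - stdNormCDF (LL h (x' - α) - x')) := by ring
  rw [e]
  calc |(stdNormCDF (UU h' (x + α') - x) - stdNormCDF (UU h (x' + α) - x'))
        - (stdNormCDF (LL h' (x - α') - x) - stdNormCDF (LL h (x' - α) - x'))|
      ≤ |stdNormCDF (UU h' (x + α') - x) - stdNormCDF (UU h (x' + α) - x')|
        + |stdNormCDF (LL h' (x - α') - x) - stdNormCDF (LL h (x' - α) - x')| := abs_sub _ _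
    _ ≤ |(UU h' (x + α') - x) - (UU h (x' + α) - x')|/2
        + |(LL h' (x - α') - x) - (LL h (x' - α) - x')|/2 := by linarith
    _ ≤ (3*|α - α'| + |h - h'|)/2 + (|α - α'| + |h - h'|)/2 := by linarith
    _ = 2*|α - α'| + |h - h'| := by ring

lemma FF_nonneg {h α : ℝ} (hh : 0 ≤ h) (hα : 0 ≤ α) (x : ℝ) : 0 ≤ FF h α x := by
  have hLU : LL h (x - α) ≤ UU h (x + α) := ll_le_uu hh (by linarith)
  have := psi_mono (show LL h (x - α) - x ≤ UU h (x + α) - x by linarith)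
  unfold FF
  linarith

end CoverageFunction
section GaussMeasure

open MeasureTheory ProbabilityTheory Set
open scoped ENNReal

lemma var_inv_ne_zero {n : ℕ} (hn : 1 ≤ n) : ((n : ℝ≥0))⁻¹ ≠ 0 := by
  simp only [ne_eq, inv_eq_zero, Nat.cast_eq_zero]
  omega

lemma sqrtn_pos {n : ℕ} (hn : 1 ≤ n) : 0 < Real.sqrt n :=
  Real.sqrt_pos.2 (Nat.cast_pos.mpr hn)

lemma gauss_Iic {n : ℕ} (hn : 1 ≤ n) (θ b : ℝ) :
    (gaussianReal θ ((n : ℝ≥0))⁻¹) (Iic b)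
      = (gaussianReal 0 1) (Iic (Real.sqrt n * (b - θ))) := by
  set c : ℝ := Real.sqrt n with hc
  have hcpos : 0 < c := sqrtn_pos hn
  have hc2 : c^2 = (n:ℝ) := Real.sq_sqrt (by positivity)
  -- first, translate
  have h1 : (gaussianReal θ ((n : ℝ≥0))⁻¹).map (· + (-θ)) = gaussianReal 0 ((n : ℝ≥0))⁻¹ := by
    rw [gaussianReal_map_add_const (-θ)]
    simp
  have h2 : (gaussianReal 0 ((n : ℝ≥0))⁻¹).map (c * ·)
      = gaussianReal 0 (NNReal.mk (c^2) (sq_nonneg _) * ((n : ℝ≥0))⁻¹) := by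
    rw [gaussianReal_map_const_mul c]
    simp
  have hv1 : (NNReal.mk (c^2) (sq_nonneg _) * ((n : ℝ≥0))⁻¹ : ℝ≥0) = 1 := by
    rw [← NNReal.coe_inj]
    push_cast
    rw [hc2]
    have : (n:ℝ) ≠ 0 := by positivity
    field_simp
  rw [hv1] at h2
  have e1 : (gaussianReal θ ((n : ℝ≥0))⁻¹) (Iic b)
      = ((gaussianReal θ ((n : ℝ≥0))⁻¹).map (· + (-θ))) (Iic (b - θ)) := by
    rw [Measure.map_apply (by fun_prop) measurableSet_Iic]
    congr 1
    ext y
    simp only [Set.mem_preimage, Set.mem_Iic]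
    constructor <;> intro <;> linarith
  have e2 : (gaussianReal 0 ((n : ℝ≥0))⁻¹) (Iic (b - θ))
      = ((gaussianReal 0 ((n : ℝ≥0))⁻¹).map (c * ·)) (Iic (c * (b - θ))) := by
    rw [Measure.map_apply (by fun_prop) measurableSet_Iic]
    congr 1
    ext y
    simp only [Set.mem_preimage, Set.mem_Iic]
    exact (mul_le_mul_iff_right₀ hcpos).symm
  rw [e1, h1, e2, h2]

lemma gauss_singleton {n : ℕ} (hn : 1 ≤ n) (θ y : ℝ) :
    (gaussianReal θ ((n : ℝ≥0))⁻¹) {y} = 0 :=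
  gaussianReal_absolutelyContinuous θ (var_inv_ne_zero hn) (Real.volume_singleton)

lemma gauss_Icc {n : ℕ} (hn : 1 ≤ n) (θ L U : ℝ) (hLU : L ≤ U) :
    ((gaussianReal θ ((n : ℝ≥0))⁻¹) (Icc L U)).toReal
      = stdNormCDF (Real.sqrt n * (U - θ)) - stdNormCDF (Real.sqrt n * (L - θ)) := by
  set μ := gaussianReal θ ((n : ℝ≥0))⁻¹ with hμ
  have hsplit : μ (Iic U) = μ (Iio L) + μ (Icc L U) := by
    rw [← measure_union ((Set.Iio_disjoint_Ici le_rfl).mono_right Set.Icc_subset_Ici_self) measurableSet_Icc,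
      Set.Iio_union_Icc_eq_Iic hLU]
  have hIio : μ (Iio L) = μ (Iic L) := by
    rw [show Iic L = Iio L ∪ {L} from (Set.Iio_union_right).symm,
      measure_union (by simp) (measurableSet_singleton L), gauss_singleton hn, add_zero]
  have hfin1 : μ (Iic L) ≠ ⊤ := measure_ne_top _ _
  have hfin2 : μ (Icc L U) ≠ ⊤ := measure_ne_top _ _
  have : (μ (Iic U)).toReal = (μ (Iic L)).toReal + (μ (Icc L U)).toReal := by
    rw [hsplit, hIio, ENNReal.toReal_add hfin1 hfin2]
  have eU : (μ (Iic U)).toReal = stdNormCDF (Real.sqrt n * (U - θ)) := by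
    rw [hμ, gauss_Iic hn]; rfl
  have eL : (μ (Iic L)).toReal = stdNormCDF (Real.sqrt n * (L - θ)) := by
    rw [hμ, gauss_Iic hn]; rfl
  rw [eU, eL] at this
  linarith

/-- master formula: the measure of the adaptive-LASSO coverage event -/
lemma gauss_event {n : ℕ} (hn : 1 ≤ n) {h aa : ℝ} (hh : 0 ≤ h) (haa : 0 ≤ aa) (θ : ℝ) :
    (gaussianReal θ ((n : ℝ≥0))⁻¹) {y : ℝ | adaLasso h y - aa ≤ θ ∧ θ ≤ adaLasso h y + aa}
      = ENNReal.ofReal (FF (Real.sqrt n * h) (Real.sqrt n * aa) (Real.sqrt n * θ)) := by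
  have hc : 0 < Real.sqrt n := sqrtn_pos hn
  rw [event_eq hh θ aa aa]
  have hLU : LL h (θ - aa) ≤ UU h (θ + aa) := ll_le_uu hh (by linarith)
  have htoReal := gauss_Icc hn θ _ _ hLU
  have hne : (gaussianReal θ ((n : ℝ≥0))⁻¹) (Icc (LL h (θ - aa)) (UU h (θ + aa))) ≠ ⊤ :=
    measure_ne_top _ _
  rw [← ENNReal.ofReal_toReal hne, htoReal]
  congr 1
  unfold FF
  have eU : Real.sqrt n * (UU h (θ + aa) - θ)
      = UU (Real.sqrt n * h) (Real.sqrt n * θ + Real.sqrt n * aa) - Real.sqrt n * θ := by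
    rw [show Real.sqrt n * θ + Real.sqrt n * aa = Real.sqrt n * (θ + aa) by ring, uu_scale hc]
    ring
  have eL : Real.sqrt n * (LL h (θ - aa) - θ)
      = LL (Real.sqrt n * h) (Real.sqrt n * θ - Real.sqrt n * aa) - Real.sqrt n * θ := by
    rw [show Real.sqrt n * θ - Real.sqrt n * aa = Real.sqrt n * (θ - aa) by ring, ll_scale hc]
    ring
  rw [eU, eL]

lemma cover_eq_FF {n : ℕ} (hn : 1 ≤ n) {h aa : ℝ} (hh : 0 ≤ h) (haa : 0 ≤ aa) (θ : ℝ) :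
    cover n (adaLasso h) aa aa θ
      = FF (Real.sqrt n * h) (Real.sqrt n * aa) (Real.sqrt n * θ) := by
  unfold cover
  rw [gauss_event hn hh haa θ, ENNReal.toReal_ofReal]
  unfold FF
  exact FF_nonneg (by positivity) (mul_nonneg (Real.sqrt_nonneg _) haa) _

end GaussMeasure
section GammaMoments

open MeasureTheory ProbabilityTheory Set
open scoped ENNReal

lemma gammaPDF_mul_self {a r : ℝ} (ha : 0 < a) (hr : 0 < r) (x : ℝ) :
    ENNReal.ofReal x * gammaPDF a r x = ENNReal.ofReal (a/r) * gammaPDF (a+1) r x := by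
  rcases lt_trichotomy x 0 with hx | hx | hx
  · rw [gammaPDF_of_neg hx, gammaPDF_of_neg hx, mul_zero, mul_zero]
  · subst hx
    rw [gammaPDF_of_nonneg le_rfl, gammaPDF_of_nonneg le_rfl]
    have e0 : (0:ℝ) ^ (a + 1 - 1) = 0 := by
      rw [show a + 1 - 1 = a by ring]
      exact Real.zero_rpow (ne_of_gt ha)
    have e0' : ENNReal.ofReal (0:ℝ) = 0 := by simp
    rw [e0]
    simp
  · rw [gammaPDF_of_nonneg hx.le, gammaPDF_of_nonneg hx.le,
      ← ENNReal.ofReal_mul hx.le, ← ENNReal.ofReal_mul (div_nonneg ha.le hr.le)]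
    congr 1
    have hga : Real.Gamma (a+1) = a * Real.Gamma a := Real.Gamma_add_one (ne_of_gt ha)
    have hxa : x ^ (a + 1 - 1) = x ^ (a - 1) * x := by
      rw [show a + 1 - 1 = (a - 1) + 1 by ring, Real.rpow_add_one (ne_of_gt hx)]
    have hra : r ^ (a + 1) = r ^ a * r := Real.rpow_add_one (ne_of_gt hr) a
    rw [hga, hxa, hra]
    have hΓ : Real.Gamma a ≠ 0 := (Real.Gamma_pos_of_pos ha).ne'
    field_simp

lemma gammaPDF_mul_sq {a r : ℝ} (ha : 0 < a) (hr : 0 < r) (x : ℝ) :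
    ENNReal.ofReal (x^2) * gammaPDF a r x
      = ENNReal.ofReal (a/r) * (ENNReal.ofReal ((a+1)/r) * gammaPDF (a+2) r x) := by
  rcases lt_or_ge x 0 with hx | hx
  · rw [gammaPDF_of_neg hx, gammaPDF_of_neg hx, mul_zero, mul_zero, mul_zero]
  · have e1 : ENNReal.ofReal (x^2) * gammaPDF a r x
        = ENNReal.ofReal x * (ENNReal.ofReal x * gammaPDF a r x) := by
      rw [← mul_assoc, ← ENNReal.ofReal_mul hx, ← sq]
    rw [e1, gammaPDF_mul_self ha hr,
      show ENNReal.ofReal x * (ENNReal.ofReal (a/r) * gammaPDF (a+1) r x)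
        = ENNReal.ofReal (a/r) * (ENNReal.ofReal x * gammaPDF (a+1) r x) by ring,
      gammaPDF_mul_self (by linarith) hr,
      show a + 1 + 1 = a + 2 by ring]

lemma measurable_gammaPDF' (a r : ℝ) : Measurable (gammaPDF a r) :=
  (measurable_gammaPDFReal a r).ennreal_ofReal

lemma gamma_moment1 {a r : ℝ} (ha : 0 < a) (hr : 0 < r) :
    ∫⁻ x, ENNReal.ofReal x ∂(gammaMeasure a r) = ENNReal.ofReal (a/r) := by
  unfold gammaMeasure
  rw [lintegral_withDensity_eq_lintegral_mul _ (measurable_gammaPDF' a r)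
    (by fun_prop : Measurable fun x : ℝ => ENNReal.ofReal x)]
  have hcong : ∀ x : ℝ, (gammaPDF a r * fun x => ENNReal.ofReal x) x
      = ENNReal.ofReal (a/r) * gammaPDF (a+1) r x := by
    intro x
    simp only [Pi.mul_apply]
    rw [mul_comm]
    exact gammaPDF_mul_self ha hr x
  rw [lintegral_congr hcong, lintegral_const_mul _ (measurable_gammaPDF' (a+1) r),
    lintegral_gammaPDF_eq_one (by linarith) hr, mul_one]

lemma gamma_moment2 {a r : ℝ} (ha : 0 < a) (hr : 0 < r) :
    ∫⁻ x, ENNReal.ofReal (x^2) ∂(gammaMeasure a r) = ENNReal.ofReal (a*(a+1)/r^2) := by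
  unfold gammaMeasure
  rw [lintegral_withDensity_eq_lintegral_mul _ (measurable_gammaPDF' a r)
    (by exact (measurable_id.pow_const 2).ennreal_ofReal)]
  have hcong : ∀ x : ℝ, (gammaPDF a r * fun x => ENNReal.ofReal (x^2)) x
      = ENNReal.ofReal (a/r) * (ENNReal.ofReal ((a+1)/r) * gammaPDF (a+2) r x) := by
    intro x
    simp only [Pi.mul_apply]
    rw [mul_comm]
    exact gammaPDF_mul_sq ha hr x
  rw [lintegral_congr hcong, lintegral_const_mul _ (by
      exact (measurable_const.mul (measurable_gammaPDF' (a+2) r))),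
    lintegral_const_mul _ (measurable_gammaPDF' (a+2) r),
    lintegral_gammaPDF_eq_one (by linarith) hr, mul_one,
    ← ENNReal.ofReal_mul (div_nonneg ha.le hr.le)]
  congr 1
  field_simp

lemma gamma_ae_nonneg {a r : ℝ} : ∀ᵐ x ∂(gammaMeasure a r), 0 ≤ x := by
  rw [ae_iff]
  have e : {x : ℝ | ¬ 0 ≤ x} = Iio 0 := by ext x; simp
  rw [e]
  unfold gammaMeasure
  rw [withDensity_apply _ measurableSet_Iio]
  exact lintegral_gammaPDF_of_nonpos le_rfl

lemma gamma_central {a r : ℝ} (ha : 0 < a) (hr : 0 < r) :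
    ∫⁻ x, ENNReal.ofReal ((x - a/r)^2) ∂(gammaMeasure a r) = ENNReal.ofReal (a/r^2) := by
  haveI : IsProbabilityMeasure (gammaMeasure a r) := isProbabilityMeasure_gammaMeasure ha hr
  set m : ℝ := a/r with hm
  have hm0 : 0 ≤ m := div_nonneg ha.le hr.le
  have hmeas1 : Measurable fun x : ℝ => ENNReal.ofReal ((x - m)^2) := by
    exact ((measurable_id.sub_const m).pow_const 2).ennreal_ofReal
  have key : (∫⁻ x, ENNReal.ofReal ((x - m)^2) ∂(gammaMeasure a r))
        + ∫⁻ x, ENNReal.ofReal (2*m*x) ∂(gammaMeasure a r)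
      = (∫⁻ x, ENNReal.ofReal (x^2) ∂(gammaMeasure a r))
        + ∫⁻ x, ENNReal.ofReal (m^2) ∂(gammaMeasure a r) := by
    rw [← lintegral_add_left hmeas1, ← lintegral_add_left (by
      exact (measurable_id.pow_const 2).ennreal_ofReal)]
    apply lintegral_congr_ae
    filter_upwards [gamma_ae_nonneg (a := a) (r := r)] with x hx
    rw [← ENNReal.ofReal_add (by positivity) (by positivity),
      ← ENNReal.ofReal_add (by positivity) (by positivity)]
    congr 1
    ring
  have h2m : ∫⁻ x, ENNReal.ofReal (2*m*x) ∂(gammaMeasure a r)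
      = ENNReal.ofReal (2*m) * ENNReal.ofReal m := by
    have : ∫⁻ x, ENNReal.ofReal (2*m*x) ∂(gammaMeasure a r)
        = ∫⁻ x, ENNReal.ofReal (2*m) * ENNReal.ofReal x ∂(gammaMeasure a r) := by
      apply lintegral_congr_ae
      filter_upwards [gamma_ae_nonneg (a := a) (r := r)] with x hx
      rw [← ENNReal.ofReal_mul (by positivity)]
    rw [this, lintegral_const_mul _ (by fun_prop : Measurable fun x : ℝ => ENNReal.ofReal x),
      gamma_moment1 ha hr]
  have hconst : ∫⁻ x, ENNReal.ofReal (m^2) ∂(gammaMeasure a r) = ENNReal.ofReal (m^2) := by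
    rw [lintegral_const, measure_univ, mul_one]
  rw [gamma_moment2 ha hr, h2m, hconst] at key
  have e1 : ENNReal.ofReal (2*m) * ENNReal.ofReal m = ENNReal.ofReal (2*m^2) := by
    rw [← ENNReal.ofReal_mul (by positivity)]
    congr 1
    ring
  have e2 : ENNReal.ofReal (a*(a+1)/r^2) + ENNReal.ofReal (m^2)
      = ENNReal.ofReal (a/r^2) + ENNReal.ofReal (2*m^2) := by
    rw [← ENNReal.ofReal_add (by positivity) (by positivity),
      ← ENNReal.ofReal_add (by positivity) (by positivity)]
    congr 1
    rw [hm]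
    field_simp
    ring
  rw [e1, e2] at key
  rw [add_comm (∫⁻ x, ENNReal.ofReal ((x - m)^2) ∂(gammaMeasure a r)) _,
    add_comm (ENNReal.ofReal (a/r^2)) _] at key
  exact (ENNReal.add_right_inj ENNReal.ofReal_ne_top).1 key

end GammaMoments

section SigmaHat

open MeasureTheory ProbabilityTheory Set
open scoped ENNReal

lemma nreal_sub_one_pos {n : ℕ} (hn : 2 ≤ n) : (0:ℝ) < (n:ℝ) - 1 := by
  have : (2:ℝ) ≤ (n:ℝ) := by exact_mod_cast hn
  linarith

lemma sigmaHat_prob {n : ℕ} (hn : 2 ≤ n) : IsProbabilityMeasure (sigmaHatLaw n) := by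
  have ha : (0:ℝ) < ((n:ℝ) - 1)/2 := by linarith [nreal_sub_one_pos hn]
  haveI := isProbabilityMeasure_gammaMeasure ha (by norm_num : (0:ℝ) < 1/2)
  unfold sigmaHatLaw
  exact Measure.isProbabilityMeasure_map (by fun_prop)

lemma sigmaHat_neg (n : ℕ) : (sigmaHatLaw n) {s : ℝ | s < 0} = 0 := by
  unfold sigmaHatLaw
  rw [show {s : ℝ | s < 0} = Iio 0 from rfl,
    Measure.map_apply (by fun_prop) measurableSet_Iio]
  convert measure_empty
  · ext q
    simp only [Set.mem_preimage, Set.mem_Iio, Set.mem_empty_iff_false, iff_false, not_lt]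
    exact Real.sqrt_nonneg _
  · infer_instance

lemma sigmaHat_cheb {n : ℕ} (hn : 2 ≤ n) {t : ℝ} (ht : 0 < t) :
    (sigmaHatLaw n) {s : ℝ | t < |s - 1|} ≤ ENNReal.ofReal (2/(t^2*((n:ℝ)-1))) := by
  set m : ℝ := (n:ℝ) - 1 with hmdef
  have hm : 0 < m := nreal_sub_one_pos hn
  have ha : (0:ℝ) < m/2 := by linarith
  have hmeas : MeasurableSet {s : ℝ | t < |s - 1|} := by
    apply measurableSet_lt measurable_const (by fun_prop)
  unfold sigmaHatLaw
  rw [Measure.map_apply (by fun_prop) hmeas]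
  have hsub : (fun q : ℝ => Real.sqrt (q / ((n:ℝ) - 1))) ⁻¹' {s | t < |s - 1|}
      ⊆ {x : ℝ | x < 0} ∪ {x : ℝ | ENNReal.ofReal (t^2*m^2) ≤ ENNReal.ofReal ((x - m)^2)} := by
    intro x hx
    rcases lt_or_ge x 0 with h0 | h0
    · exact Or.inl h0
    right
    simp only [Set.mem_preimage, Set.mem_setOf_eq] at hx ⊢
    apply ENNReal.ofReal_le_ofReal
    set s := Real.sqrt (x/m) with hsdef
    have hs0 : 0 ≤ s := Real.sqrt_nonneg _
    have hs2 : s^2 = x/m := Real.sq_sqrt (div_nonneg h0 hm.le)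
    have h1 : t < |s^2 - 1| := by
      have e : s^2 - 1 = (s - 1)*(s + 1) := by ring
      rw [e, abs_mul, abs_of_nonneg (by linarith : (0:ℝ) ≤ s + 1)]
      calc t < |s - 1| := hx
        _ = |s - 1| * 1 := (mul_one _).symm
        _ ≤ |s - 1| * (s + 1) := mul_le_mul_of_nonneg_left (by linarith) (abs_nonneg _)
    rw [hs2] at h1
    have h2 : t*m < |x - m| := by
      have e : |x - m| = |x/m - 1| * m := by
        rw [← abs_of_pos hm, ← abs_mul]
        rw [abs_of_pos hm]
        congr 1
        field_simp
      rw [e]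
      exact mul_lt_mul_of_pos_right h1 hm
    nlinarith [abs_nonneg (x - m), sq_abs (x - m), mul_nonneg ht.le hm.le]
  have hneg : (gammaMeasure (((n:ℝ) - 1)/2) (1/2)) {x : ℝ | x < 0} = 0 := by
    unfold gammaMeasure
    rw [show {x : ℝ | x < 0} = Iio 0 from rfl, withDensity_apply _ measurableSet_Iio]
    exact lintegral_gammaPDF_of_nonpos le_rfl
  have hmarkov : (gammaMeasure (((n:ℝ) - 1)/2) (1/2))
        {x : ℝ | ENNReal.ofReal (t^2*m^2) ≤ ENNReal.ofReal ((x - m)^2)}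
      ≤ (∫⁻ x, ENNReal.ofReal ((x - m)^2) ∂(gammaMeasure (((n:ℝ) - 1)/2) (1/2)))
          / ENNReal.ofReal (t^2*m^2) := by
    apply meas_ge_le_lintegral_div
    · exact ((measurable_id.sub_const m).pow_const 2).ennreal_ofReal.aemeasurable
    · exact (ENNReal.ofReal_pos.2 (by positivity)).ne'
    · exact ENNReal.ofReal_ne_top
  have hcentral : ∫⁻ x, ENNReal.ofReal ((x - m)^2) ∂(gammaMeasure (((n:ℝ) - 1)/2) (1/2))
      = ENNReal.ofReal (2*m) := by
    have e : m = (((n:ℝ) - 1)/2) / (1/2) := by rw [← hmdef]; ring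
    have e2 : (2:ℝ)*m = (((n:ℝ) - 1)/2) / ((1/2):ℝ)^2 := by rw [← hmdef]; ring
    rw [e2]
    conv_lhs => rw [e]
    exact gamma_central (by rw [← hmdef]; linarith) (by norm_num)
  calc (gammaMeasure (((n:ℝ) - 1)/2) (1/2))
        ((fun q : ℝ => Real.sqrt (q / ((n:ℝ) - 1))) ⁻¹' {s | t < |s - 1|})
      ≤ (gammaMeasure (((n:ℝ) - 1)/2) (1/2))
          ({x : ℝ | x < 0} ∪ {x : ℝ | ENNReal.ofReal (t^2*m^2) ≤ ENNReal.ofReal ((x - m)^2)}) :=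
        measure_mono hsub
    _ ≤ (gammaMeasure (((n:ℝ) - 1)/2) (1/2)) {x : ℝ | x < 0}
        + (gammaMeasure (((n:ℝ) - 1)/2) (1/2))
            {x : ℝ | ENNReal.ofReal (t^2*m^2) ≤ ENNReal.ofReal ((x - m)^2)} :=
        measure_union_le _ _
    _ ≤ 0 + ENNReal.ofReal (2*m) / ENNReal.ofReal (t^2*m^2) := by
        rw [hneg]
        apply add_le_add le_rfl
        rw [← hcentral]
        exact hmarkov
    _ = ENNReal.ofReal ((2*m) / (t^2*m^2)) := by
        rw [zero_add, ENNReal.ofReal_div_of_pos (by positivity)]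
    _ = ENNReal.ofReal (2/(t^2*((n:ℝ)-1))) := by
        congr 1
        rw [← hmdef]
        field_simp

end SigmaHat
section CoverUVRepr

open MeasureTheory ProbabilityTheory Set
open scoped ENNReal

lemma cover_le_one (n : ℕ) (est : ℝ → ℝ) (a b θ : ℝ) : cover n est a b θ ≤ 1 := by
  unfold cover
  calc ((gaussianReal θ ((n : ℝ≥0))⁻¹) _).toReal ≤ (1 : ℝ≥0∞).toReal :=
        ENNReal.toReal_mono (by simp) prob_le_one
    _ = 1 := by simp

lemma cover_nonneg (n : ℕ) (est : ℝ → ℝ) (a b θ : ℝ) : 0 ≤ cover n est a b θ :=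
  ENNReal.toReal_nonneg

lemma coverUV_nonneg (n : ℕ) (est : ℝ → ℝ → ℝ) (a θ : ℝ) : 0 ≤ coverUV n est a θ :=
  ENNReal.toReal_nonneg

lemma measurable_adaLasso_pair (η : ℝ) :
    Measurable (fun p : ℝ × ℝ => adaLasso (p.2 * η) p.1) := by
  unfold adaLasso
  apply Measurable.ite
  · exact measurableSet_le (by fun_prop) (by fun_prop)
  · exact measurable_const
  · fun_prop

lemma measurable_eventUV (η a θ : ℝ) :
    MeasurableSet {p : ℝ × ℝ |
      adaLasso (p.2 * η) p.1 - p.2 * a ≤ θ ∧ θ ≤ adaLasso (p.2 * η) p.1 + p.2 * a} := by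
  apply MeasurableSet.inter
  · exact measurableSet_le ((measurable_adaLasso_pair η).sub (by fun_prop)) measurable_const
  · exact measurableSet_le measurable_const ((measurable_adaLasso_pair η).add (by fun_prop))

lemma sigmaHat_ae_nonneg (n : ℕ) : ∀ᵐ s ∂(sigmaHatLaw n), 0 ≤ s := by
  rw [ae_iff]
  have e : {s : ℝ | ¬ 0 ≤ s} = {s : ℝ | s < 0} := by ext s; simp
  rw [e]
  exact sigmaHat_neg n

lemma coverUV_repr {n : ℕ} (hn : 2 ≤ n) {η a : ℝ} (hη : 0 ≤ η) (ha : 0 ≤ a) (θ : ℝ) :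
    coverUV n (fun s y => adaLasso (s * η) y) a θ
      = (∫⁻ s, ENNReal.ofReal
          (FF (Real.sqrt n * (s*η)) (Real.sqrt n * (s*a)) (Real.sqrt n * θ))
          ∂(sigmaHatLaw n)).toReal := by
  unfold coverUV
  haveI := sigmaHat_prob hn
  rw [Measure.prod_apply_symm (measurable_eventUV η a θ)]
  congr 1
  apply lintegral_congr_ae
  filter_upwards [sigmaHat_ae_nonneg n] with s hs
  have hsec : (fun x => (x, s)) ⁻¹' {p : ℝ × ℝ |
        adaLasso (p.2 * η) p.1 - p.2 * a ≤ θ ∧ θ ≤ adaLasso (p.2 * η) p.1 + p.2 * a}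
      = {y : ℝ | adaLasso (s * η) y - s * a ≤ θ ∧ θ ≤ adaLasso (s * η) y + s * a} := rfl
  rw [hsec, gauss_event (by omega : 1 ≤ n) (mul_nonneg hs hη) (mul_nonneg hs ha) θ]

lemma good_meas (t : ℝ) : MeasurableSet {s : ℝ | |s - 1| ≤ t} :=
  measurableSet_le (by fun_prop) measurable_const

lemma good_compl (t : ℝ) : {s : ℝ | |s - 1| ≤ t}ᶜ = {s : ℝ | t < |s - 1|} := by
  ext s; simp [not_le]

lemma coverUV_lower {n : ℕ} (hn : 2 ≤ n) {η a θ t c : ℝ} (hη : 0 ≤ η) (ha : 0 ≤ a)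
    (hc1 : c ≤ 1)
    (hc : ∀ s : ℝ, 0 ≤ s → |s - 1| ≤ t →
      c ≤ FF (Real.sqrt n * (s*η)) (Real.sqrt n * (s*a)) (Real.sqrt n * θ)) :
    c - ((sigmaHatLaw n) {s : ℝ | t < |s - 1|}).toReal
      ≤ coverUV n (fun s y => adaLasso (s * η) y) a θ := by
  haveI := sigmaHat_prob hn
  set ν := sigmaHatLaw n with hν
  set P := (ν {s : ℝ | t < |s - 1|}).toReal with hP
  have hP0 : 0 ≤ P := ENNReal.toReal_nonneg
  have hP1 : P ≤ 1 := by
    rw [hP]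
    calc (ν {s : ℝ | t < |s - 1|}).toReal ≤ (1 : ℝ≥0∞).toReal :=
          ENNReal.toReal_mono (by simp) prob_le_one
      _ = 1 := by simp
  rcases le_or_gt c 0 with hc0 | hc0
  · have := coverUV_nonneg n (fun s y => adaLasso (s * η) y) a θ
    linarith
  rw [coverUV_repr hn hη ha θ]
  set Fh : ℝ → ℝ≥0∞ := fun s => ENNReal.ofReal
    (FF (Real.sqrt n * (s*η)) (Real.sqrt n * (s*a)) (Real.sqrt n * θ)) with hFh
  set A : Set ℝ := {s : ℝ | |s - 1| ≤ t} with hA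
  have hAmeas : MeasurableSet A := good_meas t
  have hνA : 1 - P ≤ (ν A).toReal := by
    have hle : (1 : ℝ≥0∞) ≤ ν A + ν Aᶜ := by
      rw [show (1 : ℝ≥0∞) = ν Set.univ from measure_univ.symm,
        show (Set.univ : Set ℝ) = A ∪ Aᶜ by simp]
      exact measure_union_le A Aᶜ
    have hfin : ν A + ν Aᶜ ≠ ⊤ :=
      ENNReal.add_ne_top.2 ⟨measure_ne_top _ _, measure_ne_top _ _⟩
    have := ENNReal.toReal_mono hfin hle
    rw [ENNReal.toReal_add (measure_ne_top _ _) (measure_ne_top _ _), good_compl] at this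
    simp only [ENNReal.toReal_one] at this
    rw [hP]
    linarith
  have hFhat_le_one : ∀ s, Fh s ≤ 1 := by
    intro s
    rw [hFh]
    exact ENNReal.ofReal_le_one.2 (FF_le_one _ _ _)
  have hfin_int : (∫⁻ s, Fh s ∂ν) ≠ ⊤ := by
    apply ne_of_lt
    calc (∫⁻ s, Fh s ∂ν) ≤ ∫⁻ _, 1 ∂ν := lintegral_mono hFhat_le_one
      _ = 1 := by rw [lintegral_one, measure_univ]
      _ < ⊤ := by simp
  have hge : ENNReal.ofReal c * ν A ≤ ∫⁻ s, Fh s ∂ν := by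
    calc ENNReal.ofReal c * ν A = ∫⁻ _ in A, ENNReal.ofReal c ∂ν := by
          rw [setLIntegral_const]
      _ ≤ ∫⁻ s in A, Fh s ∂ν := by
          apply lintegral_mono_ae
          filter_upwards [ae_restrict_of_ae (sigmaHat_ae_nonneg n), ae_restrict_mem hAmeas]
            with s hs hsA
          exact ENNReal.ofReal_le_ofReal (hc s hs hsA)
      _ ≤ ∫⁻ s, Fh s ∂ν := lintegral_mono' Measure.restrict_le_self le_rfl
  have htr := ENNReal.toReal_mono hfin_int hge
  rw [ENNReal.toReal_mul, ENNReal.toReal_ofReal hc0.le] at htr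
  have h1P : 0 ≤ 1 - P := by linarith
  calc c - P ≤ c * (1 - P) := by nlinarith
    _ ≤ c * (ν A).toReal := by
        apply mul_le_mul_of_nonneg_left hνA hc0.le
    _ ≤ (∫⁻ s, Fh s ∂ν).toReal := htr

lemma coverUV_upper {n : ℕ} (hn : 2 ≤ n) {η a θ t C : ℝ} (hη : 0 ≤ η) (ha : 0 ≤ a)
    (hC0 : 0 ≤ C)
    (hC : ∀ s : ℝ, 0 ≤ s → |s - 1| ≤ t →
      FF (Real.sqrt n * (s*η)) (Real.sqrt n * (s*a)) (Real.sqrt n * θ) ≤ C) :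
    coverUV n (fun s y => adaLasso (s * η) y) a θ
      ≤ C + ((sigmaHatLaw n) {s : ℝ | t < |s - 1|}).toReal := by
  haveI := sigmaHat_prob hn
  set ν := sigmaHatLaw n with hν
  rw [coverUV_repr hn hη ha θ]
  set Fh : ℝ → ℝ≥0∞ := fun s => ENNReal.ofReal
    (FF (Real.sqrt n * (s*η)) (Real.sqrt n * (s*a)) (Real.sqrt n * θ)) with hFh
  set A : Set ℝ := {s : ℝ | |s - 1| ≤ t} with hA
  have hAmeas : MeasurableSet A := good_meas t
  have hsplit : (∫⁻ s, Fh s ∂ν) = (∫⁻ s in A, Fh s ∂ν) + ∫⁻ s in Aᶜ, Fh s ∂ν :=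
    (lintegral_add_compl _ hAmeas).symm
  have h1 : (∫⁻ s in A, Fh s ∂ν) ≤ ENNReal.ofReal C := by
    calc (∫⁻ s in A, Fh s ∂ν) ≤ ∫⁻ _ in A, ENNReal.ofReal C ∂ν := by
          apply lintegral_mono_ae
          filter_upwards [ae_restrict_of_ae (sigmaHat_ae_nonneg n), ae_restrict_mem hAmeas]
            with s hs hsA
          exact ENNReal.ofReal_le_ofReal (hC s hs hsA)
      _ = ENNReal.ofReal C * ν A := by rw [setLIntegral_const]
      _ ≤ ENNReal.ofReal C * 1 := by
          apply mul_le_mul_right prob_le_one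
      _ = ENNReal.ofReal C := mul_one _
  have h2 : (∫⁻ s in Aᶜ, Fh s ∂ν) ≤ ν Aᶜ := by
    calc (∫⁻ s in Aᶜ, Fh s ∂ν) ≤ ∫⁻ _ in Aᶜ, 1 ∂ν := by
          apply lintegral_mono
          intro s
          exact ENNReal.ofReal_le_one.2 (FF_le_one _ _ _)
      _ = ν Aᶜ := by rw [setLIntegral_const, one_mul]
  have htot : (∫⁻ s, Fh s ∂ν) ≤ ENNReal.ofReal C + ν Aᶜ := by
    rw [hsplit]
    exact add_le_add h1 h2
  have hfin : ENNReal.ofReal C + ν Aᶜ ≠ ⊤ :=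
    ENNReal.add_ne_top.2 ⟨ENNReal.ofReal_ne_top, measure_ne_top _ _⟩
  have := ENNReal.toReal_mono hfin htot
  rw [ENNReal.toReal_add ENNReal.ofReal_ne_top (measure_ne_top _ _),
    ENNReal.toReal_ofReal hC0, good_compl] at this
  exact this

end CoverUVRepr
section Assembly

open MeasureTheory ProbabilityTheory Set Filter
open scoped ENNReal

lemma bddBelow_cover (n : ℕ) (η a : ℝ) :
    BddBelow (Set.range fun θ : ℝ => cover n (adaLasso η) a a θ) := by
  refine ⟨0, ?_⟩
  rintro _ ⟨θ, rfl⟩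
  exact cover_nonneg _ _ _ _ _

lemma bddBelow_coverUV (n : ℕ) (η a : ℝ) :
    BddBelow (Set.range fun θ : ℝ => coverUV n (fun s y => adaLasso (s * η) y) a θ) := by
  refine ⟨0, ?_⟩
  rintro _ ⟨θ, rfl⟩
  exact coverUV_nonneg _ _ _ _

lemma coverUV_le_one {n : ℕ} (hn : 2 ≤ n) (est : ℝ → ℝ → ℝ) (a θ : ℝ) :
    coverUV n est a θ ≤ 1 := by
  haveI := sigmaHat_prob hn
  unfold coverUV
  calc (((gaussianReal θ ((n : ℝ≥0))⁻¹).prod (sigmaHatLaw n)) _).toReal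
      ≤ (1 : ℝ≥0∞).toReal := ENNReal.toReal_mono (by simp) prob_le_one
    _ = 1 := by simp

lemma I_le_FF {n : ℕ} (hn : 1 ≤ n) {η a : ℝ} (hη : 0 ≤ η) (ha : 0 ≤ a) (x : ℝ) :
    (⨅ θ : ℝ, cover n (adaLasso η) a a θ)
      ≤ FF (Real.sqrt n * η) (Real.sqrt n * a) x := by
  have hrn : Real.sqrt n ≠ 0 := (sqrtn_pos hn).ne'
  have h1 := ciInf_le (bddBelow_cover n η a) (x / Real.sqrt n)
  rwa [cover_eq_FF hn hη ha,
    show Real.sqrt n * (x / Real.sqrt n) = x by field_simp] at h1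

lemma key_small {n : ℕ} (hn : 2 ≤ n) {η a ε : ℝ} (hη : 0 ≤ η) (ha : 0 ≤ a)
    (hε : 0 < ε) (hε1 : ε ≤ 1) :
    |(⨅ θ : ℝ, coverUV n (fun s y => adaLasso (s * η) y) a θ)
        - ⨅ θ : ℝ, cover n (adaLasso η) a a θ|
      ≤ ε * (5*(Real.sqrt n * a) + Real.sqrt n * η) + 2/(ε^2*((n:ℝ)-1)) := by
  have hn1 : 1 ≤ n := by omega
  have hrn : 0 < Real.sqrt n := sqrtn_pos hn1
  set h : ℝ := Real.sqrt n * η with hhdef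
  set α : ℝ := Real.sqrt n * a with hαdef
  have hh : 0 ≤ h := mul_nonneg hrn.le hη
  have hα : 0 ≤ α := mul_nonneg hrn.le ha
  set I : ℝ := ⨅ θ : ℝ, cover n (adaLasso η) a a θ with hIdef
  set J : ℝ := ⨅ θ : ℝ, coverUV n (fun s y => adaLasso (s * η) y) a θ with hJdef
  have hI0 : 0 ≤ I := le_ciInf fun θ => cover_nonneg _ _ _ _ _
  have hI1 : I ≤ 1 := le_trans (ciInf_le (bddBelow_cover n η a) 0) (cover_le_one _ _ _ _ _)
  have hIFF : ∀ x : ℝ, I ≤ FF h α x := fun x => I_le_FF hn1 hη ha x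
  have harg1 : ∀ s : ℝ, Real.sqrt n * (s*η) = s*h := fun s => by rw [hhdef]; ring
  have harg2 : ∀ s : ℝ, Real.sqrt n * (s*a) = s*α := fun s => by rw [hαdef]; ring
  set P : ℝ := ((sigmaHatLaw n) {s : ℝ | ε < |s - 1|}).toReal with hPdef
  have hP0 : 0 ≤ P := ENNReal.toReal_nonneg
  have hPb : P ≤ 2/(ε^2*((n:ℝ)-1)) := by
    have h1 := sigmaHat_cheb hn hε
    have h2 := ENNReal.toReal_mono ENNReal.ofReal_ne_top h1
    rwa [ENNReal.toReal_ofReal (div_nonneg (by norm_num) (mul_nonneg (sq_nonneg ε) (nreal_sub_one_pos hn).le))] at h2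
  -- auxiliary facts about good s
  have hgfacts : ∀ s : ℝ, 0 ≤ s → |s - 1| ≤ ε →
      (0 ≤ s*h ∧ 0 ≤ s*α ∧ |α - s*α| ≤ ε*α ∧ |h - s*h| ≤ ε*h ∧ |α - s*α| ≤ α) := by
    intro s hs hsg
    refine ⟨mul_nonneg hs hh, mul_nonneg hs hα, ?_, ?_, ?_⟩
    · rw [show α - s*α = -((s-1)*α) by ring, abs_neg, abs_mul, abs_of_nonneg hα]
      exact mul_le_mul_of_nonneg_right hsg hα
    · rw [show h - s*h = -((s-1)*h) by ring, abs_neg, abs_mul, abs_of_nonneg hh]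
      exact mul_le_mul_of_nonneg_right hsg hh
    · rw [show α - s*α = -((s-1)*α) by ring, abs_neg, abs_mul, abs_of_nonneg hα]
      nlinarith [abs_nonneg (s-1)]
  -- lower bound core
  have hcore : ∀ s : ℝ, 0 ≤ s → |s - 1| ≤ ε → ∀ x : ℝ,
      I - ε*(2*α + h) ≤ FF (s*h) (s*α) x := by
    intro s hs hsg
    obtain ⟨hsh, hsα, hdα, hdh, hd⟩ := hgfacts s hs hsg
    have hmain : ∀ x : ℝ, 0 ≤ x → I - ε*(2*α + h) ≤ FF (s*h) (s*α) x := by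
      intro x hx
      have hrec := FF_recenter hh hsh hα hsα hx hd
      have hI2 := hIFF (x + α - s*α)
      have h1 := (abs_le.1 hrec).1
      linarith
    intro x
    rcases le_total 0 x with hx | hx
    · exact hmain x hx
    · have := hmain (-x) (by linarith)
      rwa [FF_symm] at this
  -- lower bound for J
  have hJlow : I - ε*(2*α + h) - P ≤ J := by
    apply le_ciInf
    intro θ
    have hc1 : I - ε*(2*α+h) ≤ 1 := by nlinarith
    have happ := coverUV_lower hn (t := ε) (θ := θ) hη ha hc1 ?_
    · exact happ
    · intro s hs hsg
      rw [harg1 s, harg2 s]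
      exact hcore s hs hsg _
  -- upper bound for J
  have hJup : ∀ δ : ℝ, 0 < δ → J ≤ I + δ + ε*(5*α + h) + P := by
    intro δ hδ
    have hlt : I < I + δ := by linarith
    obtain ⟨θ₀, hθ₀⟩ := exists_lt_of_ciInf_lt (show (⨅ θ : ℝ, cover n (adaLasso η) a a θ) < I + δ from hlt)
    have hcov0 : FF h α (Real.sqrt n * θ₀) < I + δ := by
      rwa [cover_eq_FF hn1 hη ha] at hθ₀
    set x₀ : ℝ := |Real.sqrt n * θ₀| with hx₀def
    have hx₀ : 0 ≤ x₀ := abs_nonneg _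
    have hFF0 : FF h α x₀ < I + δ := by
      rcases abs_cases (Real.sqrt n * θ₀) with ⟨he, _⟩ | ⟨he, _⟩
      · rwa [hx₀def, he]
      · rw [hx₀def, he, FF_symm]
        exact hcov0
    set xs : ℝ := x₀ + ε*α with hxsdef
    have hεα : 0 ≤ ε*α := mul_nonneg hε.le hα
    have hxs : 0 ≤ xs := by rw [hxsdef]; linarith
    have hub : ∀ s : ℝ, 0 ≤ s → |s - 1| ≤ ε →
        FF (s*h) (s*α) xs ≤ I + δ + ε*(5*α + h) := by
      intro s hs hsg
      obtain ⟨hsh, hsα, hdα, hdh, hd⟩ := hgfacts s hs hsg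
      have hrec := FF_recenter hh hsh hα hsα hxs hd
      have h2 := (abs_le.1 hrec).2
      have habs1 := (abs_le.1 hdα).1
      have habs2 := (abs_le.1 hdα).2
      have hx2 : x₀ ≤ xs + α - s*α := by rw [hxsdef]; linarith
      have hright := FF_rightward hh hα hx₀ hx2
      have hup2 : xs + α - s*α - x₀ ≤ 2*(ε*α) := by rw [hxsdef]; linarith
      nlinarith [hFF0.le]
    have hC0 : 0 ≤ I + δ + ε*(5*α+h) := by
      have : 0 ≤ ε*(5*α+h) := mul_nonneg hε.le (by linarith)
      linarith
    have happ := coverUV_upper hn (θ := xs / Real.sqrt n) (t := ε)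
      (C := I + δ + ε*(5*α+h)) hη ha hC0 ?_
    · calc J ≤ coverUV n (fun s y => adaLasso (s * η) y) a (xs / Real.sqrt n) :=
            ciInf_le (bddBelow_coverUV n η a) _
        _ ≤ I + δ + ε*(5*α+h) + P := happ
    · intro s hs hsg
      rw [harg1 s, harg2 s, show Real.sqrt n * (xs / Real.sqrt n) = xs by
        field_simp]
      exact hub s hs hsg
  have hJup' : J ≤ I + ε*(5*α + h) + P := by
    by_contra hcon
    push_neg at hcon
    have hδ : 0 < (J - (I + ε*(5*α+h) + P))/2 := by linarith
    have := hJup _ hδ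
    linarith
  have hmono : ε*(2*α + h) ≤ ε*(5*α + h) :=
    mul_le_mul_of_nonneg_left (by linarith) hε.le
  have habs : |J - I| ≤ ε*(5*α + h) + P := by
    rw [abs_le]
    constructor
    · linarith
    · linarith
  calc |J - I| ≤ ε*(5*α + h) + P := habs
    _ ≤ ε * (5*α + h) + 2/(ε^2*((n:ℝ)-1)) := by linarith
    _ = ε * (5*(Real.sqrt n * a) + Real.sqrt n * η) + 2/(ε^2*((n:ℝ)-1)) := by
        rw [hhdef, hαdef]

lemma key_large {n : ℕ} (hn : 2 ≤ n) {η a : ℝ} (hη : 0 ≤ η) (ha : 0 ≤ a)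
    (hw : 0 ≤ Real.sqrt n * (a - η)) :
    |(⨅ θ : ℝ, coverUV n (fun s y => adaLasso (s * η) y) a θ)
        - ⨅ θ : ℝ, cover n (adaLasso η) a a θ|
      ≤ 4*(1 - stdNormCDF (Real.sqrt n * (a - η) / 2)) + 32/((n:ℝ)-1) := by
  have hn1 : 1 ≤ n := by omega
  have hrn : 0 < Real.sqrt n := sqrtn_pos hn1
  set w : ℝ := Real.sqrt n * (a - η) with hwdef
  set I : ℝ := ⨅ θ : ℝ, cover n (adaLasso η) a a θ with hIdef
  set J : ℝ := ⨅ θ : ℝ, coverUV n (fun s y => adaLasso (s * η) y) a θ with hJdef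
  have hI1 : I ≤ 1 := le_trans (ciInf_le (bddBelow_cover n η a) 0) (cover_le_one _ _ _ _ _)
  have hJ1 : J ≤ 1 := le_trans (ciInf_le (bddBelow_coverUV n η a) 0)
    (coverUV_le_one hn _ _ _)
  -- lower bound for I
  have hIlow : stdNormCDF w - stdNormCDF (-w) ≤ I := by
    apply le_ciInf
    intro θ
    rw [cover_eq_FF hn1 hη ha]
    have := FF_ge_easy (h := Real.sqrt n * η) (α := Real.sqrt n * a)
      (mul_nonneg hrn.le hη) (Real.sqrt n * θ)
    rwa [show Real.sqrt n * a - Real.sqrt n * η = w by rw [hwdef]; ring] at this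
  -- lower bound for J
  set P : ℝ := ((sigmaHatLaw n) {s : ℝ | (1/4 : ℝ) < |s - 1|}).toReal with hPdef
  have hP0 : 0 ≤ P := ENNReal.toReal_nonneg
  have hPb : P ≤ 32/((n:ℝ)-1) := by
    have h1 := sigmaHat_cheb hn (show (0:ℝ) < 1/4 by norm_num)
    have h2 := ENNReal.toReal_mono ENNReal.ofReal_ne_top h1
    rw [ENNReal.toReal_ofReal (div_nonneg (by norm_num) (mul_nonneg (by norm_num) (nreal_sub_one_pos hn).le))] at h2
    calc P ≤ 2/((1/4:ℝ)^2*((n:ℝ)-1)) := h2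
      _ = 32/((n:ℝ)-1) := by
          have hm := nreal_sub_one_pos hn
          field_simp
          ring
  have hJlow : (stdNormCDF (w/2) - stdNormCDF (-(w/2))) - P ≤ J := by
    apply le_ciInf
    intro θ
    have hc1 : stdNormCDF (w/2) - stdNormCDF (-(w/2)) ≤ 1 := by
      linarith [psi_le_one (w/2), psi_nonneg (-(w/2))]
    have happ := coverUV_lower hn (t := (1/4:ℝ)) (θ := θ) hη ha hc1 ?_
    · exact happ
    · intro s hs hsg
      have hs2 : (1/2 : ℝ) ≤ s := by
        have := (abs_le.1 hsg).1
        linarith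
      have hsw : w/2 ≤ s*w := by nlinarith
      have heasy := FF_ge_easy (h := Real.sqrt n * (s*η)) (α := Real.sqrt n * (s*a))
        (mul_nonneg hrn.le (mul_nonneg hs hη)) (Real.sqrt n * θ)
      rw [show Real.sqrt n * (s*a) - Real.sqrt n * (s*η) = s*w by rw [hwdef]; ring] at heasy
      have hm1 := psi_mono hsw
      have hm2 := psi_mono (show -(s*w) ≤ -(w/2) by linarith)
      linarith
  -- combine
  have hψle : stdNormCDF w - stdNormCDF (-w) ≥ stdNormCDF (w/2) - stdNormCDF (-(w/2)) := by
    have h1 := psi_mono (show w/2 ≤ w by linarith)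
    have h2 := psi_mono (show -w ≤ -(w/2) by linarith)
    linarith
  have hneg : stdNormCDF (-(w/2)) = 1 - stdNormCDF (w/2) := psi_neg (w/2)
  rw [abs_le]
  constructor
  · -- -(bound) ≤ J - I
    have : I - J ≤ (1 - (stdNormCDF (w/2) - stdNormCDF (-(w/2)))) + P := by linarith
    have hb : 1 - (stdNormCDF (w/2) - stdNormCDF (-(w/2))) = 2*(1 - stdNormCDF (w/2)) := by
      rw [hneg]; ring
    have hψ1 : stdNormCDF (w/2) ≤ 1 := psi_le_one _
    rw [show Real.sqrt n * (a - η) / 2 = w/2 by rw [hwdef]]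
    linarith
  · have : J - I ≤ 1 - (stdNormCDF w - stdNormCDF (-w)) := by linarith
    have hb : 1 - (stdNormCDF (w/2) - stdNormCDF (-(w/2))) = 2*(1 - stdNormCDF (w/2)) := by
      rw [hneg]; ring
    have hψ1 : stdNormCDF (w/2) ≤ 1 := psi_le_one _
    rw [show Real.sqrt n * (a - η) / 2 = w/2 by rw [hwdef]]
    linarith

end Assembly
set_option maxHeartbeats 1000000 in
theorem stmt_17' (η : ℕ → ℝ) (hη : ∀ n, 0 < η n) (hη0 : Tendsto η atTop (nhds 0))
    (a : ℕ → ℝ) (ha : ∀ n, 0 ≤ a n) :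
    Tendsto (fun n : ℕ =>
        (⨅ θ : ℝ, coverUV n (fun s y => adaLasso (s * η n) y) (a n) θ) -
          (⨅ θ : ℝ, cover n (adaLasso (η n)) (a n) (a n) θ))
      atTop (nhds 0) := by
  rw [Metric.tendsto_nhds]
  intro ζ hζ
  obtain ⟨M, hM1, hMζ⟩ : ∃ M : ℝ, 1 ≤ M ∧ 4 / M^2 ≤ ζ/4 := by
    refine ⟨max 1 (4 / Real.sqrt ζ), le_max_left _ _, ?_⟩
    set M : ℝ := max 1 (4 / Real.sqrt ζ) with hMdef
    have hM1 : (1:ℝ) ≤ M := le_max_left _ _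
    have hM0 : (0:ℝ) < M := by linarith
    have h4 : 4 / Real.sqrt ζ ≤ M := le_max_right _ _
    have hsζ : 0 < Real.sqrt ζ := Real.sqrt_pos.2 hζ
    have hd : (0:ℝ) ≤ 4 / Real.sqrt ζ := by positivity
    have hsq : (4 / Real.sqrt ζ)^2 ≤ M^2 := by nlinarith
    have h16 : 16 / ζ ≤ M^2 := by
      rwa [div_pow, Real.sq_sqrt hζ.le, show (4:ℝ)^2 = 16 by norm_num] at hsq
    rw [div_le_div_iff₀ (by positivity) (by norm_num)]
    have h17 : 16 ≤ M^2 * ζ := by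
      have := (div_le_iff₀ hζ).1 h16
      linarith
    linarith
  have hM0 : (0:ℝ) < M := lt_of_lt_of_le one_pos hM1
  obtain ⟨r, hr0, hrζ⟩ : ∃ r : ℝ, 0 < r ∧ M * (6*r) = ζ/4 := by
    refine ⟨ζ / (24 * M), div_pos hζ (by positivity), ?_⟩
    field_simp
    ring
  obtain ⟨W, hWnn, hW⟩ : ∃ W : ℝ, 0 ≤ W ∧ 1 - ζ/16 < stdNormCDF W := by
    obtain ⟨W0, hW0⟩ :=
      (psi_tendsto_one.eventually (eventually_gt_nhds (show 1 - ζ/16 < 1 by linarith))).exists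
    exact ⟨max W0 0, le_max_right _ _, lt_of_lt_of_le hW0 (psi_mono (le_max_left _ _))⟩
  have hev1 : ∀ᶠ n : ℕ in atTop, η n ≤ r/2 :=
    hη0.eventually (eventually_le_nhds (by linarith : (0:ℝ) < r/2))
  have hev2 : ∀ᶠ n : ℕ in atTop, 2 ≤ n := eventually_ge_atTop 2
  obtain ⟨N3, hN3⟩ := exists_nat_ge (M^2)
  have hev3 : ∀ᶠ n : ℕ in atTop, M ≤ Real.sqrt n := by
    filter_upwards [eventually_ge_atTop N3] with n hn
    have h1 : (M^2:ℝ) ≤ n := le_trans hN3 (by exact_mod_cast hn)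
    calc M = Real.sqrt (M^2) := (Real.sqrt_sq hM0.le).symm
      _ ≤ Real.sqrt n := Real.sqrt_le_sqrt h1
  obtain ⟨N4, hN4⟩ := exists_nat_ge (128/ζ + 1)
  have hev4 : ∀ᶠ n : ℕ in atTop, 32/((n:ℝ)-1) ≤ ζ/4 := by
    filter_upwards [eventually_ge_atTop N4] with n hn
    have h1 : (128/ζ + 1 : ℝ) ≤ n := le_trans hN4 (by exact_mod_cast hn)
    have h3 : 128/ζ ≤ (n:ℝ) - 1 := by linarith
    have h5 := (div_le_iff₀ hζ).1 h3
    rw [div_le_div_iff₀ (by linarith [div_pos (by norm_num : (0:ℝ) < 128) hζ]) (by norm_num)]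
    nlinarith
  obtain ⟨N5, hN5⟩ := exists_nat_ge ((4*W/r)^2)
  have hev5 : ∀ᶠ n : ℕ in atTop, W ≤ Real.sqrt n * r / 4 := by
    filter_upwards [eventually_ge_atTop N5] with n hn
    have h1 : ((4*W/r)^2:ℝ) ≤ n := le_trans hN5 (by exact_mod_cast hn)
    have h2 : 4*W/r ≤ Real.sqrt n := by
      calc 4*W/r = Real.sqrt ((4*W/r)^2) := (Real.sqrt_sq (by positivity)).symm
        _ ≤ _ := Real.sqrt_le_sqrt h1
    have h6 := (div_le_iff₀ hr0).1 h2
    linarith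
  filter_upwards [hev1, hev2, hev3, hev4, hev5] with n h1 h2 h3 h4 h5
  rw [Real.dist_eq, sub_zero]
  have hrn : 0 < Real.sqrt n := sqrtn_pos (by omega)
  by_cases hcase : a n ≤ r
  · have hε : 0 < M / Real.sqrt n := by positivity
    have hε1 : M / Real.sqrt n ≤ 1 := by rw [div_le_one hrn]; exact h3
    have hkey := key_small h2 (hη n).le (ha n) hε hε1
    have hterm1 : (M/Real.sqrt n) * (5*(Real.sqrt n * a n) + Real.sqrt n * η n) ≤ ζ/4 := by
      have he : (M/Real.sqrt n) * (5*(Real.sqrt n * a n) + Real.sqrt n * η n)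
          = M * (5*a n + η n) := by
        field_simp
      rw [he]
      have hsum : 5*a n + η n ≤ 6*r := by linarith
      calc M*(5*a n + η n) ≤ M*(6*r) := mul_le_mul_of_nonneg_left hsum hM0.le
        _ = ζ/4 := hrζ
    have hterm2 : 2/((M/Real.sqrt n)^2*((n:ℝ)-1)) ≤ ζ/4 := by
      have hsq : (M/Real.sqrt n)^2 = M^2/(n:ℝ) := by
        rw [div_pow, Real.sq_sqrt (by positivity)]
      rw [hsq]
      have hm := nreal_sub_one_pos h2
      have hn0 : (0:ℝ) < n := by
        have : (2:ℝ) ≤ n := by exact_mod_cast h2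
        linarith
      have e : 2/((M^2/(n:ℝ))*((n:ℝ)-1)) = 2*(n:ℝ)/(M^2*((n:ℝ)-1)) := by
        field_simp
      rw [e]
      have hle : 2*(n:ℝ)/(M^2*((n:ℝ)-1)) ≤ 4/M^2 := by
        rw [div_le_div_iff₀ (mul_pos (by positivity) hm) (by positivity)]
        have hcast : (2:ℝ) ≤ n := by exact_mod_cast h2
        nlinarith
      linarith
    have := le_trans hkey (add_le_add hterm1 hterm2)
    linarith
  · push_neg at hcase
    have hwpos : 0 ≤ Real.sqrt n * (a n - η n) := mul_nonneg hrn.le (by linarith)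
    have hkey := key_large h2 (hη n).le (ha n) hwpos
    have harg : W ≤ Real.sqrt n * (a n - η n) / 2 := by
      have ha2 : r/2 ≤ a n - η n := by linarith
      calc W ≤ Real.sqrt n * r / 4 := h5
        _ ≤ Real.sqrt n * (a n - η n) / 2 := by nlinarith
    have hψ := psi_mono harg
    have ht1 : 4*(1 - stdNormCDF (Real.sqrt n * (a n - η n) / 2)) ≤ ζ/4 := by linarith
    have := le_trans hkey (add_le_add ht1 h4)
    linarith

/-- Theorem 4 (adaptive LASSO): if `η_n → 0`, the infimal coverage probabilities of
`E_{A,n} = [θ̃_A - σ̂ a_n, θ̃_A + σ̂ a_n]` and `C_{A,n} = [θ̂_A - a_n, θ̂_A + a_n]`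
are asymptotically equal. -/
theorem stmt_17 (η : ℕ → ℝ) (hη : ∀ n, 0 < η n) (hη0 : Tendsto η atTop (nhds 0))
    (a : ℕ → ℝ) (ha : ∀ n, 0 ≤ a n) :
    Tendsto (fun n : ℕ =>
        (⨅ θ : ℝ, coverUV n (fun s y => adaLasso (s * η n) y) (a n) θ) -
          (⨅ θ : ℝ, cover n (adaLasso (η n)) (a n) (a n) θ))
      atTop (nhds 0) :=
  stmt_17' η hη hη0 a ha
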